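/- Let F be an uncountable field, and let r ≥ 1 and k ≥ 1 be integers such that there exists at least one algebraically spread set of k points in F^r. Then there exists a countable family of proper Zariski-closed subsets of (F^r)^k such that every k-tuple (p_1,…,p_k) ∈ (F^r)^k avoiding all of them consists of k distinct points forming an algebraically spread set; that is, a very generic set of k points in F^r is algebraically spread. -/

import Mathlib

/-- The Hasse derivative `H^α f`: the coefficient of `y^α` in `f(x+y)`. -/
noncomputable def mvHasseDeriv {F : Type*} [CommSemiring F] {d : ℕ}
    (α : Fin d →₀ ℕ) (f : MvPolynomial (Fin d) F) : MvPolynomial (Fin d) F :=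
  MvPolynomial.coeff α
    (MvPolynomial.eval₂ (MvPolynomial.C.comp MvPolynomial.C)
      (fun i => MvPolynomial.X i + MvPolynomial.C (MvPolynomial.X i)) f)

/-- `mult(f,p) ≥ n`: all Hasse derivatives of order `< n` vanish at `p`. -/
def MultGE {F : Type*} [CommSemiring F] {d : ℕ}
    (f : MvPolynomial (Fin d) F) (p : Fin d → F) (n : ℕ) : Prop :=
  ∀ α : Fin d →₀ ℕ, (∑ i, α i) < n → MvPolynomial.eval p (mvHasseDeriv α f) = 0

/-- A finite point set `P ⊆ F^r` is algebraically spread. -/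
def AlgebraicallySpread (F : Type*) [Field F] (r : ℕ) (P : Set (Fin r → F)) : Prop :=
  P.Finite ∧ ∀ ε : ℝ, 0 < ε → ∃ n₀ : ℕ, ∀ n : ℕ, n₀ < n →
    ∀ f : MvPolynomial (Fin r) F,
      (f.totalDegree : ℝ) < (1 - ε) * (P.ncard : ℝ) ^ ((1:ℝ)/(r:ℝ)) * (n:ℝ) →
      (∀ p ∈ P, MultGE f p n) → f = 0

/-- A Zariski-closed subset of the affine space `F^ι`: the common zero locus of a set of
polynomials. -/
def ZarClosed {F : Type*} [CommSemiring F] {ι : Type*} (Z : Set (ι → F)) : Prop :=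
  ∃ S : Set (MvPolynomial ι F), Z = {x | ∀ g ∈ S, MvPolynomial.eval x g = 0}
-- ===================== auxiliary material =====================

open MvPolynomial

section MatrixLemma

/-- Over a field, a rectangular matrix has a nontrivial kernel iff all its maximal
minors (choices of `card C` rows) vanish. -/
theorem kernel_iff_minors {F : Type*} [Field F] {R C : Type*} [Fintype R] [Fintype C]
    [DecidableEq R] [DecidableEq C] (M : Matrix R C F) :
    (∃ c : C → F, c ≠ 0 ∧ M.mulVec c = 0) ↔
      ∀ σ : C ↪ R, (M.submatrix σ id).det = 0 := by
  constructor
  · rintro ⟨c, hc, hMc⟩ σ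
    rw [← Matrix.exists_mulVec_eq_zero_iff]
    refine ⟨c, hc, funext fun b => ?_⟩
    simpa [Matrix.mulVec, Matrix.submatrix, dotProduct] using congrFun hMc (σ b)
  · intro hdet
    by_contra hker
    push_neg at hker
    have hinj : Function.Injective M.mulVecLin := by
      rw [← LinearMap.ker_eq_bot, LinearMap.ker_eq_bot']
      intro c hc
      by_contra h0
      exact hker c h0 hc
    have hrank : M.rank = Fintype.card C := by
      rw [Matrix.rank, LinearMap.finrank_range_of_inj hinj,
        Module.finrank_fintype_fun_eq_card]
    have hspan : Module.finrank F (Submodule.span F (Set.range M)) = Fintype.card C := by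
      exact (Matrix.rank_eq_finrank_span_row M).symm.trans hrank
    obtain ⟨t, hts, htspan, htind⟩ := exists_linearIndependent F (Set.range M)
    have htfin : t.Finite := (Set.finite_range _).subset hts
    have := htfin.fintype
    have hcardt : Fintype.card t = Fintype.card C := by
      rw [← Set.toFinset_card, ← finrank_span_set_eq_card htind, htspan, hspan]
    let e : C ≃ t := (Fintype.equivOfCardEq hcardt).symm
    choose pick hpick using fun v : t => hts v.2
    have hσinj : Function.Injective (fun b => pick (e b)) := by
      intro b1 b2 h
      apply e.injective
      apply Subtype.ext
      rw [← hpick (e b1), ← hpick (e b2)]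
      simp only at h
      rw [h]
    set σ : C ↪ R := ⟨fun b => pick (e b), hσinj⟩
    have hrows : (fun b => (M.submatrix σ id) b) = fun b => ((e b : C → F)) := by
      funext b
      funext j
      simp [Matrix.submatrix, σ]
      rw [hpick (e b)]
    have hind2 : LinearIndependent F (fun b => (M.submatrix σ id) b) := by
      rw [hrows]
      exact htind.comp e e.injective
    have : IsUnit (M.submatrix σ id) := Matrix.linearIndependent_rows_iff_isUnit.mp hind2
    have hne : (M.submatrix σ id).det ≠ 0 :=
      IsUnit.ne_zero ((Matrix.isUnit_iff_isUnit_det _).mp this)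
    exact hne (hdet σ)

end MatrixLemma

/-- `f ↦ eval p (H^α f)` as a linear map. -/
noncomputable def lhasse {F : Type*} [CommRing F] {r : ℕ} (p : Fin r → F) (α : Fin r →₀ ℕ) :
    MvPolynomial (Fin r) F →ₗ[F] F where
  toFun f := eval p (mvHasseDeriv α f)
  map_add' f g := by simp [mvHasseDeriv, eval₂_add, coeff_add]
  map_smul' c f := by
    simp only [mvHasseDeriv, smul_eq_C_mul, eval₂_mul, eval₂_C, RingHom.comp_apply,
      coeff_C_mul, RingHom.id_apply, map_mul, eval_C, smul_eq_mul]

/-- Bounded exponent vectors: columns of the constraint matrix. -/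
def BddExp (r d : ℕ) := {a : Fin r → Fin (d + 1) // (∑ l, ((a l : ℕ))) ≤ d}

/-- Row index: exponent vectors of total degree `< n`. -/
def RowExp (r n : ℕ) := {a : Fin r → Fin (n + 1) // (∑ l, ((a l : ℕ))) < n}

instance (r d : ℕ) : Fintype (BddExp r d) := by unfold BddExp; infer_instance
instance (r n : ℕ) : Fintype (RowExp r n) := by unfold RowExp; infer_instance
instance (r d : ℕ) : DecidableEq (BddExp r d) := by unfold BddExp; infer_instance
instance (r n : ℕ) : DecidableEq (RowExp r n) := by unfold RowExp; infer_instance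

/-- Convert a bounded exponent vector to a finsupp. -/
noncomputable def tf {r m : ℕ} (a : Fin r → Fin m) : Fin r →₀ ℕ :=
  Finsupp.equivFunOnFinite.symm (fun l => (a l : ℕ))

@[simp] lemma tf_apply {r m : ℕ} (a : Fin r → Fin m) (l : Fin r) : tf a l = a l := rfl

lemma tf_inj {r m : ℕ} {a b : Fin r → Fin m} (h : tf a = tf b) : a = b := by
  funext l
  have := congrFun (congrArg (fun f : Fin r →₀ ℕ => (f : Fin r → ℕ)) h) l
  exact Fin.ext this

lemma sum_tf {r m : ℕ} (a : Fin r → Fin m) : (∑ i, tf a i) = ∑ l, (a l : ℕ) := rfl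

lemma tf_sum_eq {r m : ℕ} (a : Fin r → Fin m) :
    ((tf a).sum fun _ e => e) = ∑ l, (a l : ℕ) := by
  rw [Finsupp.sum_fintype]
  · rfl
  · intro i; rfl

lemma support_sum_eq {r : ℕ} (γ : Fin r →₀ ℕ) : (∑ i ∈ γ.support, γ i) = ∑ i, γ i :=
  Finset.sum_subset (Finset.subset_univ _) (fun i _ hi => Finsupp.notMem_support_iff.mp hi)

/-- The polynomial-entried constraint matrix. -/
noncomputable def Epoly (F : Type*) [CommRing F] (r k d n : ℕ) :
    Matrix (Fin k × RowExp r n) (BddExp r d) (MvPolynomial (Fin k × Fin r) F) :=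
  fun ia b =>
    MvPolynomial.rename (Prod.mk ia.1) (mvHasseDeriv (tf ia.2.1) (MvPolynomial.monomial (tf b.1) 1))

/-- The bad locus: tuples admitting a nonzero polynomial of degree `≤ d` with
multiplicity `≥ n` at every point. -/
def BadSet (F : Type*) [CommRing F] (r k d n : ℕ) : Set (Fin k × Fin r → F) :=
  {x | ∃ f : MvPolynomial (Fin r) F, f ≠ 0 ∧ f.totalDegree ≤ d ∧
        ∀ i : Fin k, MultGE f (fun l => x (i, l)) n}

lemma epoly_eval {F : Type*} [CommRing F] {r k d n : ℕ} (x : Fin k × Fin r → F)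
    (ia : Fin k × RowExp r n) (b : BddExp r d) :
    eval x (Epoly F r k d n ia b) =
      eval (fun l => x (ia.1, l)) (mvHasseDeriv (tf ia.2.1) (monomial (tf b.1) 1)) := by
  simp [Epoly, eval_rename_prod_mk]

lemma badSet_iff_kernel {F : Type*} [Field F] {r k d n : ℕ} (x : Fin k × Fin r → F) :
    x ∈ BadSet F r k d n ↔
      ∃ c : BddExp r d → F, c ≠ 0 ∧ ((Epoly F r k d n).map (eval x)).mulVec c = 0 := by
  have key : ∀ (c : BddExp r d → F) (ia : Fin k × RowExp r n),
      ((Epoly F r k d n).map (eval x)).mulVec c ia =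
        eval (fun l => x (ia.1, l))
          (mvHasseDeriv (tf ia.2.1) (∑ b : BddExp r d, monomial (tf b.1) (c b))) := by
    intro c ia
    have : (∑ b : BddExp r d, monomial (tf b.1) (c b)) =
        ∑ b : BddExp r d, c b • monomial (tf b.1) (1 : F) := by
      refine Finset.sum_congr rfl fun b _ => ?_
      rw [smul_monomial, smul_eq_mul, mul_one]
    rw [this]
    rw [show eval (fun l => x (ia.1, l))
          (mvHasseDeriv (tf ia.2.1) (∑ b : BddExp r d, c b • monomial (tf b.1) (1:F)))
        = lhasse (fun l => x (ia.1, l)) (tf ia.2.1)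
            (∑ b : BddExp r d, c b • monomial (tf b.1) (1:F)) from rfl]
    rw [map_sum]
    simp only [map_smul]
    simp only [Matrix.mulVec, dotProduct, Matrix.map_apply, epoly_eval]
    refine Finset.sum_congr rfl fun b _ => ?_
    rw [smul_eq_mul, mul_comm]
    rfl
  constructor
  · rintro ⟨f, hf0, hfd, hmult⟩
    refine ⟨fun b => coeff (tf b.1) f, ?_, ?_⟩
    · obtain ⟨β, hβ⟩ := (support_nonempty.mpr hf0 : f.support.Nonempty)
      have hβd : (∑ l, β l) ≤ d := by
        have := le_totalDegree hβ
        rw [Finsupp.sum] at this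
        rw [← support_sum_eq]
        exact this.trans hfd
      have hlt : ∀ l, β l < d + 1 := fun l =>
        Nat.lt_succ_of_le (le_trans (Finset.single_le_sum (f := fun l => β l)
          (fun _ _ => Nat.zero_le _) (Finset.mem_univ l)) hβd)
      intro hc
      have hb : tf (fun l => (⟨β l, hlt l⟩ : Fin (d+1))) = β := by
        ext l; simp
      have hsum : (∑ l, (((fun l => (⟨β l, hlt l⟩ : Fin (d+1))) l : ℕ))) ≤ d := by
        simpa using hβd
      have := congrFun hc ⟨fun l => ⟨β l, hlt l⟩, hsum⟩
      simp only [Pi.zero_apply] at this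
      rw [hb] at this
      exact (mem_support_iff.mp hβ) this
    · funext ia
      rw [key]
      have hfeq : (∑ b : BddExp r d, monomial (tf b.1) (coeff (tf b.1) f)) = f := by
        apply MvPolynomial.ext
        intro γ
        rw [coeff_sum]
        simp only [coeff_monomial]
        by_cases hγ : (∑ l, γ l) ≤ d
        · have hltγ : ∀ l, γ l < d + 1 := fun l =>
            Nat.lt_succ_of_le (le_trans (Finset.single_le_sum (f := fun l => γ l)
              (fun _ _ => Nat.zero_le _) (Finset.mem_univ l)) hγ)
          set b₀ : BddExp r d := ⟨fun l => ⟨γ l, hltγ l⟩, by simpa using hγ⟩ with hb₀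
          have htf : tf b₀.1 = γ := by ext l; simp [hb₀]
          have hcong : ∀ b ∈ Finset.univ, (if tf (b : BddExp r d).1 = γ then coeff (tf b.1) f else 0)
              = (if b = b₀ then coeff γ f else 0) := by
            intro b _
            by_cases hbb : b = b₀
            · subst hbb; rw [if_pos htf, htf, if_pos rfl]
            · rw [if_neg, if_neg hbb]
              intro h
              exact hbb (Subtype.ext (tf_inj (h.trans htf.symm)))
          rw [Finset.sum_congr rfl hcong]
          rw [Finset.sum_ite_eq' Finset.univ b₀ (fun _ => coeff γ f)]
          simp
        · rw [Finset.sum_eq_zero, eq_comm]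
          · apply coeff_eq_zero_of_totalDegree_lt
            rw [support_sum_eq]
            exact lt_of_le_of_lt hfd (Nat.lt_of_not_le hγ)
          · intro b _
            rw [if_neg]
            intro h
            apply hγ
            rw [← h, sum_tf]
            exact b.2
      rw [hfeq]
      exact hmult ia.1 (tf ia.2.1) (by rw [sum_tf]; exact ia.2.2)
  · rintro ⟨c, hc0, hcv⟩
    refine ⟨∑ b : BddExp r d, monomial (tf b.1) (c b), ?_, ?_, ?_⟩
    · obtain ⟨b₁, hb₁⟩ := Function.ne_iff.mp hc0
      intro h0
      apply hb₁
      have := congrArg (coeff (tf b₁.1)) h0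
      rw [coeff_sum] at this
      simp only [coeff_monomial, coeff_zero] at this
      have hcong : ∀ b ∈ Finset.univ, (if tf (b : BddExp r d).1 = tf b₁.1 then c b else 0)
          = (if b = b₁ then c b else 0) := by
        intro b _
        by_cases hbb : b = b₁
        · subst hbb; simp
        · rw [if_neg (fun h => hbb (Subtype.ext (tf_inj h))), if_neg hbb]
      rw [Finset.sum_congr rfl hcong] at this
      rwa [Finset.sum_ite_eq' Finset.univ b₁ c, if_pos (Finset.mem_univ b₁)] at this
    · apply totalDegree_finsetSum_le
      intro b _
      exact (totalDegree_monomial_le _ _).trans (le_of_eq_of_le (tf_sum_eq _) b.2)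
    · intro i α hα
      have hlt : ∀ l, α l < n + 1 := fun l =>
        Nat.lt_succ_of_le (le_of_lt (lt_of_le_of_lt (Finset.single_le_sum (f := fun l => α l)
          (fun _ _ => Nat.zero_le _) (Finset.mem_univ l)) hα))
      set a : RowExp r n := ⟨fun l => ⟨α l, hlt l⟩, by simpa using hα⟩ with ha
      have htf : tf a.1 = α := by ext l; simp [ha]
      have := congrFun hcv (i, a)
      rw [key] at this
      simp only [Pi.zero_apply] at this
      rwa [htf] at this

lemma zarClosed_badSet (F : Type*) [Field F] (r k d n : ℕ) :
    ZarClosed (BadSet F r k d n) := by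
  classical
  refine ⟨Set.range (fun σ : BddExp r d ↪ Fin k × RowExp r n =>
    ((Epoly F r k d n).submatrix σ id).det), ?_⟩
  ext x
  rw [Set.mem_setOf_eq, show (x ∈ BadSet F r k d n) ↔ _ from badSet_iff_kernel x,
    kernel_iff_minors]
  constructor
  · intro h g hg
    obtain ⟨σ, rfl⟩ := hg
    rw [RingHom.map_det, RingHom.mapMatrix_apply, ← Matrix.submatrix_map]
    exact h σ
  · intro h σ
    have := h _ ⟨σ, rfl⟩
    rwa [RingHom.map_det, RingHom.mapMatrix_apply, ← Matrix.submatrix_map] at this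

lemma zarClosed_empty {F : Type*} [Field F] {ι : Type*} :
    ZarClosed (∅ : Set (ι → F)) := by
  refine ⟨{1}, ?_⟩
  ext x
  simp

/-- If `F` is uncountable and some algebraically spread set of `k` points exists in `F^r`, then
a very generic `k`-tuple of points of `F^r` — i.e. one avoiding a suitable countable family of
proper Zariski-closed subsets of `(F^r)^k` — consists of `k` distinct points forming an
algebraically spread set. -/
theorem veryGeneric_points_algebraicallySpread
    (F : Type) [Field F] [Uncountable F] (r k : ℕ) (hr : 1 ≤ r) (hk : 1 ≤ k)
    (hex : ∃ P : Set (Fin r → F), P.Finite ∧ P.ncard = k ∧ AlgebraicallySpread F r P) :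
    ∃ Z : ℕ → Set (Fin k × Fin r → F),
      (∀ i, ZarClosed (Z i) ∧ Z i ≠ Set.univ) ∧
      ∀ p : Fin k → Fin r → F,
        (∀ i, (fun x : Fin k × Fin r => p x.1 x.2) ∉ Z i) →
        Function.Injective p ∧ AlgebraicallySpread F r (Set.range p) := by
  classical
  obtain ⟨P, hPfin, hPk, hPsp⟩ := hex
  have hk0 : 0 < k := hk
  have hPfin2 := hPfin.fintype
  have hcard : Fintype.card P = k := by
    rw [← Nat.card_eq_fintype_card, Nat.card_coe_set_eq, hPk]
  let e : P ≃ Fin k := Fintype.equivFinOfCardEq hcard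
  set q : Fin k → (Fin r → F) := fun i => ((e.symm i : P) : Fin r → F) with hq
  have hqsurj : ∀ p ∈ P, ∃ i, q i = p := fun p hp => ⟨e ⟨p, hp⟩, by simp [hq]⟩
  choose N hN using fun m : ℕ => hPsp.2 (1/((m:ℝ)+1)) (by positivity)
  set K : ℝ := (k : ℝ) ^ ((1:ℝ)/(r:ℝ)) with hK
  have hK0 : 0 ≤ K := Real.rpow_nonneg (by positivity) _
  set good : ℕ → ℕ → ℕ → Prop := fun m dd nn =>
    N m < nn ∧ (dd : ℝ) < (1 - 1/((m:ℝ)+1)) * K * nn with hgood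
  set diag : Fin k → Fin k → Set (Fin k × Fin r → F) :=
    fun i j => {x | ∀ l, x (i, l) = x (j, l)} with hdiag
  have hBadNotUniv : ∀ m dd nn, good m dd nn →
      (fun z : Fin k × Fin r => q z.1 z.2) ∉ BadSet F r k dd nn := by
    rintro m dd nn hg ⟨f, hf0, hfd, hm⟩
    refine hf0 (hN m nn hg.1 f ?_ ?_)
    · rw [hPk]
      exact lt_of_le_of_lt (Nat.cast_le.mpr hfd) hg.2
    · intro pt hpt
      obtain ⟨i, rfl⟩ := hqsurj pt hpt
      exact hm i
  refine ⟨fun t =>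
    if t % 2 = 0 then
      (if (⟨t/2 % k, Nat.mod_lt _ hk0⟩ : Fin k) = ⟨t/2/k % k, Nat.mod_lt _ hk0⟩ then ∅
       else diag ⟨t/2 % k, Nat.mod_lt _ hk0⟩ ⟨t/2/k % k, Nat.mod_lt _ hk0⟩)
    else
      (if good (t/2).unpair.1 (t/2).unpair.2.unpair.1 (t/2).unpair.2.unpair.2 then
         BadSet F r k (t/2).unpair.2.unpair.1 (t/2).unpair.2.unpair.2 else ∅), ?_, ?_⟩
  · -- each set is Zariski-closed and proper
    intro t
    beta_reduce
    have hempty : ZarClosed (∅ : Set (Fin k × Fin r → F)) ∧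
        (∅ : Set (Fin k × Fin r → F)) ≠ Set.univ :=
      ⟨zarClosed_empty, Set.empty_ne_univ⟩
    by_cases ht : t % 2 = 0
    · rw [if_pos ht]
      by_cases hij : (⟨t/2 % k, Nat.mod_lt _ hk0⟩ : Fin k) = ⟨t/2/k % k, Nat.mod_lt _ hk0⟩
      · rw [if_pos hij]; exact hempty
      · rw [if_neg hij]
        set i : Fin k := ⟨t/2 % k, Nat.mod_lt _ hk0⟩
        set j : Fin k := ⟨t/2/k % k, Nat.mod_lt _ hk0⟩
        constructor
        · refine ⟨Set.range (fun l : Fin r =>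
            (MvPolynomial.X (i, l) - MvPolynomial.X (j, l) : MvPolynomial (Fin k × Fin r) F)), ?_⟩
          ext x
          simp [hdiag, sub_eq_zero]
        · rw [Set.ne_univ_iff_exists_notMem]
          refine ⟨fun z => if z = (i, (⟨0, hr⟩ : Fin r)) then (1:F) else 0, fun hmem => ?_⟩
          have h1 := hmem ⟨0, hr⟩
          beta_reduce at h1
          rw [if_pos rfl, if_neg (fun h => hij ((congrArg Prod.fst h).symm))] at h1
          exact one_ne_zero h1
    · rw [if_neg ht]
      by_cases hg : good (t/2).unpair.1 (t/2).unpair.2.unpair.1 (t/2).unpair.2.unpair.2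
      · rw [if_pos hg]
        refine ⟨zarClosed_badSet F r k _ _, ?_⟩
        rw [Set.ne_univ_iff_exists_notMem]
        exact ⟨_, hBadNotUniv _ _ _ hg⟩
      · rw [if_neg hg]; exact hempty
  · -- avoidance implies injective and spread
    intro p hp
    have hinj : Function.Injective p := by
      intro i j hij
      by_contra hne
      set s := i.1 + k * j.1 with hs
      have h2 := hp (2 * s)
      have e1 : (2 * s) % 2 = 0 := Nat.mul_mod_right 2 s
      have e2 : (2 * s) / 2 = s := Nat.mul_div_cancel_left s (by norm_num)
      beta_reduce at h2
      rw [if_pos e1, e2] at h2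
      have e3 : s % k = i.1 := by
        rw [hs, Nat.add_mul_mod_self_left, Nat.mod_eq_of_lt i.2]
      have e4 : s / k % k = j.1 := by
        rw [hs, Nat.add_mul_div_left _ _ hk0, Nat.div_eq_of_lt i.2, Nat.zero_add,
          Nat.mod_eq_of_lt j.2]
      have hi : (⟨s % k, Nat.mod_lt _ hk0⟩ : Fin k) = i := Fin.ext e3
      have hj : (⟨s / k % k, Nat.mod_lt _ hk0⟩ : Fin k) = j := Fin.ext e4
      rw [hi, hj, if_neg hne] at h2
      exact h2 (fun l => congrFun hij l)
    refine ⟨hinj, Set.finite_range p, ?_⟩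
    intro ε hε
    obtain ⟨m, hm⟩ := exists_nat_one_div_lt hε
    refine ⟨N m, ?_⟩
    intro n hn f hdeg hmult
    have hnc : (Set.range p).ncard = k := by
      rw [← Nat.card_coe_set_eq, Nat.card_range_of_injective hinj,
        Nat.card_eq_fintype_card, Fintype.card_fin]
    by_contra hf0
    have hgoodf : good m f.totalDegree n := by
      refine ⟨hn, ?_⟩
      rw [hnc] at hdeg
      calc (f.totalDegree : ℝ) < (1 - ε) * K * n := hdeg
        _ = (1 - ε) * (K * n) := by ring
        _ ≤ (1 - 1/((m:ℝ)+1)) * (K * n) := by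
            refine mul_le_mul_of_nonneg_right (by linarith) ?_
            exact mul_nonneg hK0 (Nat.cast_nonneg n)
        _ = (1 - 1/((m:ℝ)+1)) * K * n := by ring
    have h2 := hp (2 * Nat.pair m (Nat.pair f.totalDegree n) + 1)
    have e1 : (2 * Nat.pair m (Nat.pair f.totalDegree n) + 1) % 2 = 1 := by
      omega
    have e2 : (2 * Nat.pair m (Nat.pair f.totalDegree n) + 1) / 2
        = Nat.pair m (Nat.pair f.totalDegree n) := by omega
    beta_reduce at h2
    rw [if_neg (show ¬(2 * Nat.pair m (Nat.pair f.totalDegree n) + 1) % 2 = 0 by omega),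
      e2, Nat.unpair_pair] at h2
    simp only [Nat.unpair_pair] at h2
    rw [if_pos hgoodf] at h2
    exact h2 ⟨f, hf0, le_rfl, fun i => hmult (p i) ⟨i, rfl⟩⟩
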